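/- For every odd prime p and every integer l ≥ 1, the identity P_{2,p}(z)^{p^l − 1} · f_2|_p(z) = P_{1,p}(z)^{p(p^l − 1)/(p−1)} · f_2|_p(z^{p^l}) holds in 𝔽_p[[z]] (the exponent p(p^l − 1)/(p−1) equals p + p^2 + ⋯ + p^l). -/

import Mathlib

/-- Substitution of `z^k` for `z` in a formal power series. -/
noncomputable def expandPS {R : Type*} [Semiring R] (k : ℕ) (f : PowerSeries R) :
    PowerSeries R :=
  PowerSeries.mk fun n => if k ∣ n then PowerSeries.coeff (n / k) f else 0

open PowerSeries Finset Nat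

lemma coeff_expandPS {R : Type*} [Semiring R] (k n : ℕ) (f : PowerSeries R) :
    coeff n (expandPS k f) = if k ∣ n then coeff (n / k) f else 0 := by
  simp [expandPS]

lemma expandPS_expandPS {R : Type*} [Semiring R] (k m : ℕ) (f : PowerSeries R) :
    expandPS k (expandPS m f) = expandPS (k * m) f := by
  ext n
  simp only [coeff_expandPS]
  by_cases h1 : k ∣ n
  · by_cases h2 : m ∣ n / k
    · rw [if_pos h1, if_pos h2, if_pos, Nat.div_div_eq_div_mul]
      exact (Nat.dvd_div_iff_mul_dvd h1).mp h2
    · rw [if_pos h1, if_neg h2, if_neg]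
      intro hkm
      exact h2 ((Nat.dvd_div_iff_mul_dvd h1).mpr hkm)
  · rw [if_neg h1, if_neg fun hkm => h1 (dvd_trans (Dvd.intro m rfl) hkm)]

lemma expandPS_mul {R : Type*} [CommSemiring R] {k : ℕ} (hk : 0 < k) (f g : PowerSeries R) :
    expandPS k (f * g) = expandPS k f * expandPS k g := by
  ext n
  simp only [PowerSeries.coeff_mul, coeff_expandPS]
  by_cases h : k ∣ n
  · rw [if_pos h]
    obtain ⟨m, rfl⟩ := h
    rw [Nat.mul_div_cancel_left _ hk]
    rw [← Finset.sum_filter_add_sum_filter_not (Finset.HasAntidiagonal.antidiagonal (k * m))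
      (fun q => k ∣ q.1)]
    have h2 : ∀ q ∈ (Finset.HasAntidiagonal.antidiagonal (k*m)).filter (fun q => ¬ k ∣ q.1),
        (if k ∣ q.1 then coeff (q.1 / k) f else 0) * (if k ∣ q.2 then coeff (q.2/k) g else 0) = 0 := by
      intro q hq
      rw [Finset.mem_filter] at hq
      rw [if_neg hq.2, zero_mul]
    rw [Finset.sum_congr rfl h2, Finset.sum_const_zero, add_zero]
    refine (Finset.sum_nbij' (fun q => (k * q.1, k * q.2)) (fun q => (q.1 / k, q.2 / k))
      ?_ ?_ ?_ ?_ ?_)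
    · intro q hq
      rw [Finset.HasAntidiagonal.mem_antidiagonal] at hq
      simp only [Finset.mem_filter, Finset.HasAntidiagonal.mem_antidiagonal]
      exact ⟨by rw [← Nat.mul_add, hq], Dvd.intro _ rfl⟩
    · intro q hq
      rw [Finset.mem_filter, Finset.HasAntidiagonal.mem_antidiagonal] at hq
      obtain ⟨h3, h4⟩ := hq
      have h5 : k ∣ q.2 := (Nat.dvd_add_right h4).mp (h3 ▸ Dvd.intro m rfl)
      rw [Finset.HasAntidiagonal.mem_antidiagonal]
      obtain ⟨x, hx⟩ := h4
      obtain ⟨y, hy⟩ := h5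
      simp only
      rw [hx, hy, Nat.mul_div_cancel_left _ hk, Nat.mul_div_cancel_left _ hk]
      rw [hx, hy, ← Nat.mul_add] at h3
      exact Nat.eq_of_mul_eq_mul_left hk h3
    · intro q hq
      simp [Nat.mul_div_cancel_left _ hk]
    · intro q hq
      rw [Finset.mem_filter, Finset.HasAntidiagonal.mem_antidiagonal] at hq
      obtain ⟨h3, h4⟩ := hq
      have h5 : k ∣ q.2 := (Nat.dvd_add_right h4).mp (h3 ▸ Dvd.intro m rfl)
      obtain ⟨x, hx⟩ := h4
      obtain ⟨y, hy⟩ := h5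
      simp only
      rw [hx, hy, Nat.mul_div_cancel_left _ hk, Nat.mul_div_cancel_left _ hk, ← hx, ← hy]
    · intro q hq
      rw [if_pos (Dvd.intro _ rfl), if_pos (Dvd.intro _ rfl),
        Nat.mul_div_cancel_left _ hk, Nat.mul_div_cancel_left _ hk]
  · rw [if_neg h]
    refine (Finset.sum_eq_zero fun q hq => ?_).symm
    rw [Finset.HasAntidiagonal.mem_antidiagonal] at hq
    by_cases h1 : k ∣ q.1
    · by_cases h2 : k ∣ q.2
      · exact absurd (hq ▸ Nat.dvd_add h1 h2) h
      · rw [if_neg h2, mul_zero]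
    · rw [if_neg h1, zero_mul]

lemma expandPS_coe {R : Type*} [CommSemiring R] {k : ℕ} (hk : 0 < k) (P : Polynomial R) :
    expandPS k (P : PowerSeries R) = ((Polynomial.expand R k P : Polynomial R) : PowerSeries R) := by
  ext n
  simp only [coeff_expandPS, Polynomial.coeff_coe, Polynomial.coeff_expand hk]

lemma pow_pow_eq_expand {p : ℕ} [Fact p.Prime] (P : Polynomial (ZMod p)) (l : ℕ) :
    P ^ (p ^ l) = Polynomial.expand _ (p ^ l) P := by
  induction l with
  | zero => simp
  | succ l ih =>
    have h1 : Polynomial.expand (ZMod p) p (Polynomial.expand _ (p ^ l) P)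
        = (Polynomial.expand _ (p ^ l) P) ^ p := by
      have := Polynomial.map_frobenius_expand p (Polynomial.expand _ (p ^ l) P)
      rwa [ZMod.frobenius_zmod, Polynomial.map_id] at this
    rw [pow_succ, pow_mul, ih, ← h1, Polynomial.expand_expand, mul_comm p (p ^ l)]

lemma coeff_coe_mul_expandPS {R : Type*} [CommSemiring R] {k : ℕ} (hk : 0 < k)
    (P : Polynomial R) (hP : ∀ i, k ≤ i → P.coeff i = 0) (h : PowerSeries R) (n : ℕ) :
    coeff n ((P : PowerSeries R) * expandPS k h) = P.coeff (n % k) * coeff (n / k) h := by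
  rw [PowerSeries.coeff_mul]
  have hmem : (n % k, n - n % k) ∈ Finset.HasAntidiagonal.antidiagonal n := by
    rw [Finset.HasAntidiagonal.mem_antidiagonal]
    exact Nat.add_sub_cancel' (Nat.mod_le n k)
  rw [Finset.sum_eq_single_of_mem _ hmem]
  · have hd : k ∣ n - n % k := Nat.dvd_sub_mod n
    rw [Polynomial.coeff_coe, coeff_expandPS, if_pos hd]
    congr 2
    have e : n - n % k = k * (n / k) := by have := Nat.mod_add_div n k; omega
    rw [e, Nat.mul_div_cancel_left _ hk]
  · intro q hq hne
    rw [Finset.HasAntidiagonal.mem_antidiagonal] at hq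
    by_cases h1 : k ≤ q.1
    · rw [Polynomial.coeff_coe, hP _ h1, zero_mul]
    · push_neg at h1
      rw [coeff_expandPS]
      by_cases h2 : k ∣ q.2
      · exfalso
        apply hne
        obtain ⟨c, hc⟩ := h2
        have e1 : q.1 = n % k := by
          rw [← hq, hc, Nat.add_mul_mod_self_left, Nat.mod_eq_of_lt h1]
        have e2 : q.2 = n - n % k := by omega
        exact Prod.ext e1 e2
      · rw [if_neg h2, mul_zero]

lemma hkeyZ (a : ℕ → ℤ)
    (ha : ∀ n : ℕ, (a n : ℚ) =
      ((-1 : ℚ) / (2 * (n : ℚ) - 1)) * (Nat.choose (2 * n) n : ℚ) ^ 2) (n : ℕ) :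
    (2 * (n : ℤ) - 1) * a n = -(Nat.choose (2 * n) n : ℤ) ^ 2 := by
  have hne : (2 * (n : ℚ) - 1) ≠ 0 := by
    rcases Nat.eq_zero_or_pos n with h | h
    · subst h; norm_num
    · have : (1 : ℚ) ≤ (n : ℚ) := by exact_mod_cast h
      nlinarith
  have h := ha n
  have h2 : (2 * (n : ℚ) - 1) * (a n : ℚ) = -(Nat.choose (2 * n) n : ℚ) ^ 2 := by
    field_simp at h
    linarith [h]
  exact_mod_cast h2

section NT
variable {p : ℕ} [hpf : Fact p.Prime]

lemma lucasCB (n : ℕ) :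
    ((Nat.choose (2 * n) n : ZMod p)) =
      (Nat.choose (2 * (n % p)) (n % p) : ZMod p) * (Nat.choose (2 * (n / p)) (n / p) : ZMod p) := by
  have hp : p.Prime := hpf.out
  have hlucas := (Choose.choose_modEq_choose_mod_mul_choose_div (p := p) (n := 2*n) (k := n))
  have hz : ((Nat.choose (2*n) n : ℤ) : ZMod p)
      = ((Nat.choose (2*n % p) (n % p) * Nat.choose (2*n / p) (n / p) : ℤ) : ZMod p) :=
    (ZMod.intCast_eq_intCast_iff' _ _ _).mpr hlucas
  push_cast at hz
  set a := n % p with hadef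
  set b := n / p with hbdef
  have hnab : n = a + b * p := (Nat.mod_add_div' n p).symm
  have hap : a < p := Nat.mod_lt _ hp.pos
  by_cases hcase : 2 * a < p
  · have h1 : 2 * n % p = 2 * a := by
      conv_lhs => rw [hnab]
      rw [Nat.mul_add, ← Nat.mul_assoc, Nat.add_mul_mod_self_right, Nat.mod_eq_of_lt hcase]
    have h2 : 2 * n / p = 2 * b := by
      conv_lhs => rw [hnab]
      rw [Nat.mul_add, ← Nat.mul_assoc, Nat.add_mul_div_right _ _ hp.pos, Nat.div_eq_of_lt hcase,
        zero_add]
    rw [h1, h2] at hz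
    exact hz
  · push_neg at hcase
    have h2ap : 2 * a < 2 * p := by omega
    have h1 : 2 * n % p = 2 * a - p := by
      conv_lhs => rw [hnab]
      rw [Nat.mul_add, ← Nat.mul_assoc, Nat.add_mul_mod_self_right,
        Nat.mod_eq_sub_mod hcase, Nat.mod_eq_of_lt (by omega)]
    have hz2 : Nat.choose (2 * n % p) a = 0 := by
      rw [h1]
      exact Nat.choose_eq_zero_of_lt (by omega)
    have hdvd : (p : ℕ) ∣ Nat.choose (2 * a) a := hp.dvd_choose hap (by omega) hcase
    have hzero : ((Nat.choose (2 * a) a : ZMod p)) = 0 := by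
      exact_mod_cast (ZMod.natCast_eq_zero_iff _ _).mpr hdvd
    rw [hz2] at hz
    push_cast at hz
    rw [hz, hzero, zero_mul, zero_mul]

lemma kummerCB {n s : ℕ} (hn : 1 ≤ n) (hs : p ^ s ∣ 2 * n - 1) :
    p ^ s ∣ Nat.choose (2 * n) n := by
  have hp : p.Prime := hpf.out
  apply pow_dvd_of_le_emultiplicity
  set b := max (s + 1) (Nat.log p (2 * n) + 1) with hb
  have hlog : Nat.log p (2 * n) < b := lt_of_lt_of_le (Nat.lt_succ_self _) (le_max_right _ _)
  rw [Nat.Prime.emultiplicity_choose hp (by omega) hlog]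
  have hsub : Finset.Ico 1 (s + 1) ⊆
      Finset.filter (fun i => p ^ i ≤ n % p ^ i + (2 * n - n) % p ^ i) (Finset.Ico 1 b) := by
    intro i hi
    rw [Finset.mem_Ico] at hi
    rw [Finset.mem_filter, Finset.mem_Ico]
    refine ⟨⟨hi.1, lt_of_lt_of_le hi.2 (le_max_left _ _)⟩, ?_⟩
    have h2n : 2 * n - n = n := by omega
    rw [h2n]
    have hdvd : p ^ i ∣ 2 * n - 1 := dvd_trans (pow_dvd_pow p (by omega)) hs
    have hpi1 : 1 < p ^ i := Nat.one_lt_pow (by omega) hp.one_lt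
    have h2nmod : (2 * n) % p ^ i = 1 := by
      obtain ⟨c, hc⟩ := hdvd
      have : 2 * n = p ^ i * c + 1 := by omega
      rw [this, Nat.mul_add_mod, Nat.mod_eq_of_lt hpi1]
    set r := n % p ^ i with hr
    have hmod : (2 * r) % p ^ i = 1 := by
      have hcong : 2 * r ≡ 2 * n [MOD p ^ i] := Nat.ModEq.mul_left 2 (Nat.mod_modEq n (p ^ i))
      rw [Nat.ModEq] at hcong
      rwa [h2nmod] at hcong
    show p ^ i ≤ r + r
    by_contra hlt
    push_neg at hlt
    rw [Nat.mod_eq_of_lt (by omega)] at hmod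
    omega
  calc (s : ℕ∞) = (Finset.Ico 1 (s+1)).card := by simp
  _ ≤ _ := by exact_mod_cast Nat.cast_le.mpr (Finset.card_le_card hsub)

lemma badCase (a : ℕ → ℤ)
    (hkey : ∀ n : ℕ, (2 * (n : ℤ) - 1) * a n = -(Nat.choose (2 * n) n : ℤ) ^ 2)
    {n : ℕ} (hn : 1 ≤ n) (hdvd : p ∣ 2 * n - 1) : ((a n : ZMod p) = 0) := by
  have hp : p.Prime := hpf.out
  have hn1 : 1 ≤ 2 * n - 1 := by omega
  set s := (2 * n - 1).factorization p with hsdef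
  have hs1 : 1 ≤ s := by
    rw [hsdef]
    exact (Nat.Prime.factorization_pos_of_dvd hp (by omega) hdvd)
  have hps : p ^ s ∣ 2 * n - 1 := Nat.ordProj_dvd _ _
  obtain ⟨u, hu⟩ := hps
  have hpu : ¬ p ∣ u := by
    have h := Nat.not_dvd_ordCompl hp (show 2*n-1 ≠ 0 by omega)
    have e : (2 * n - 1) / p ^ (2 * n - 1).factorization p = u := by
      rw [← hsdef, hu, Nat.mul_div_cancel_left _ (pow_pos hp.pos s)]
    rwa [e] at h
  have hchoose : p ^ s ∣ Nat.choose (2 * n) n := kummerCB hn (hu ▸ Dvd.intro u rfl)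
  have hZ : ((p : ℤ) ^ (2 * s)) ∣ (Nat.choose (2 * n) n : ℤ) ^ 2 := by
    rw [pow_mul']
    exact pow_dvd_pow_of_dvd (by exact_mod_cast Int.natCast_dvd_natCast.mpr hchoose) 2
  have h2n1 : (2 * (n : ℤ) - 1) = (p : ℤ) ^ s * u := by
    have : ((2 * n - 1 : ℕ) : ℤ) = 2 * (n : ℤ) - 1 := by push_cast; omega
    rw [← this, hu]; push_cast; ring
  have hZ2 : (p : ℤ) ^ (2 * s) ∣ (p : ℤ) ^ s * u * a n := by
    rw [← h2n1, hkey n]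
    exact dvd_neg.mpr hZ
  have hZ3 : (p : ℤ) ^ s ∣ u * a n := by
    have : (p : ℤ) ^ (2 * s) = (p : ℤ) ^ s * (p : ℤ) ^ s := by rw [← pow_add]; ring_nf
    rw [this, mul_assoc] at hZ2
    exact (mul_dvd_mul_iff_left (a := (p:ℤ)^s) (by simp [hp.ne_zero])).mp hZ2
  have hps' : (p : ℤ) ∣ u * a n := dvd_trans (dvd_pow_self _ (by omega)) hZ3
  have hpan : (p : ℤ) ∣ a n := by
    rcases ((Nat.prime_iff_prime_int.mp hp).dvd_mul.mp hps') with h | h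
    · exact absurd (Int.ofNat_dvd.mp (by exact_mod_cast h)) hpu
    · exact h
  exact (ZMod.intCast_zmod_eq_zero_iff_dvd _ _).mpr (by exact_mod_cast hpan)

lemma coeffL2 (a : ℕ → ℤ)
    (hkey : ∀ n : ℕ, (2 * (n : ℤ) - 1) * a n = -(Nat.choose (2 * n) n : ℤ) ^ 2) (n : ℕ) :
    (a n : ZMod p) = (a (n % p) : ZMod p) * (Nat.choose (2 * (n / p)) (n / p) : ZMod p) ^ 2 := by
  have hp : p.Prime := hpf.out
  set α := n % p with hα
  set β := n / p with hβ
  have hnc : ((n : ZMod p)) = (α : ZMod p) := by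
    conv_lhs => rw [← Nat.mod_add_div n p]
    push_cast [ZMod.natCast_self]
    ring
  have castkey : ∀ m : ℕ, (2 * (m : ZMod p) - 1) * (a m : ZMod p)
      = -(Nat.choose (2 * m) m : ZMod p) ^ 2 := by
    intro m
    have := congrArg (fun z : ℤ => (z : ZMod p)) (hkey m)
    push_cast at this
    exact_mod_cast this
  set u : ZMod p := 2 * (α : ZMod p) - 1 with hu
  by_cases huz : u = 0
  · have hα1 : 1 ≤ α := by
      rcases Nat.eq_zero_or_pos α with h0 | h
      · exfalso
        rw [hu, h0] at huz
        norm_num at huz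
      · exact h
    have hdvdα : p ∣ 2 * α - 1 := by
      have : ((2 * α - 1 : ℕ) : ZMod p) = 0 := by
        push_cast [Nat.cast_sub (by omega : 1 ≤ 2 * α)]
        rw [← hu]; exact huz
      exact (ZMod.natCast_eq_zero_iff _ _).mp this
    have hn1 : 1 ≤ n := le_trans hα1 (Nat.mod_le n p)
    have hdvdn : p ∣ 2 * n - 1 := by
      have hmodeq : (2 * n - 1) ≡ (2 * α - 1) [MOD p] := by
        have h1 : n ≡ α [MOD p] := (Nat.mod_modEq n p).symm
        have h2 : 2 * n ≡ 2 * α [MOD p] := h1.mul_left 2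
        have h3 : (2 * n - 1) + 1 ≡ (2 * α - 1) + 1 [MOD p] := by
          rw [Nat.sub_add_cancel (by omega), Nat.sub_add_cancel (by omega)]
          exact h2
        exact Nat.ModEq.add_right_cancel' 1 h3
      exact (Nat.modEq_zero_iff_dvd).mp (hmodeq.trans ((Nat.modEq_zero_iff_dvd).mpr hdvdα))
    rw [badCase a hkey hn1 hdvdn, badCase a hkey hα1 hdvdα, zero_mul]
  · apply mul_left_cancel₀ huz
    have h1 := castkey n
    rw [hnc, ← hu] at h1
    have h2 := castkey α
    rw [← hu] at h2
    rw [h1, lucasCB n, ← hα, ← hβ, mul_pow]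
    rw [show -(((Nat.choose (2*α) α : ZMod p)) ^ 2 * ((Nat.choose (2*β) β : ZMod p)) ^ 2)
      = (-((Nat.choose (2*α) α : ZMod p)) ^ 2) * ((Nat.choose (2*β) β : ZMod p)) ^ 2 by ring,
      ← h2]
    ring

end NT

lemma coeff_of_sum {R : Type*} [Semiring R] (p : ℕ) (c : ℕ → R) (i : ℕ) :
    (∑ n ∈ Finset.range p, Polynomial.C (c n) * Polynomial.X ^ n).coeff i
      = if i < p then c i else 0 := by
  rw [Polynomial.finset_sum_coeff]
  simp only [Polynomial.coeff_C_mul, Polynomial.coeff_X_pow]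
  rw [Finset.sum_congr rfl (fun n _ => by rw [mul_ite, mul_one, mul_zero])]
  rw [Finset.sum_ite_eq (Finset.range p) i c]
  simp [Finset.mem_range]

/-- For every odd prime `p` and every `l ≥ 1`,
`P_{2,p}(z)^{p^l−1} f₂|_p(z) = P_{1,p}(z)^{p(p^l−1)/(p−1)} f₂|_p(z^{p^l})` in `𝔽_p[[z]]`. -/
theorem stmt14 (p : ℕ) (hp : p.Prime) (hodd : Odd p) (l : ℕ) (hl : 1 ≤ l)
    (a : ℕ → ℤ)
    (ha : ∀ n : ℕ, (a n : ℚ) =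
      ((-1 : ℚ) / (2 * (n : ℚ) - 1)) * (Nat.choose (2 * n) n : ℚ) ^ 2)
    (f₂p : PowerSeries (ZMod p)) (P₁p P₂p : Polynomial (ZMod p))
    (hf₂p : f₂p = PowerSeries.mk fun n => ((a n : ZMod p)))
    (hP₁p : P₁p = ∑ n ∈ Finset.range p,
      Polynomial.C (((Nat.choose (2 * n) n : ZMod p)) ^ 2) * Polynomial.X ^ n)
    (hP₂p : P₂p = ∑ n ∈ Finset.range p, Polynomial.C ((a n : ZMod p)) * Polynomial.X ^ n) :
    (P₂p : PowerSeries (ZMod p)) ^ (p ^ l - 1) * f₂p =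
      (P₁p : PowerSeries (ZMod p)) ^ (p * (p ^ l - 1) / (p - 1)) * expandPS (p ^ l) f₂p := by
  haveI hpf : Fact p.Prime := ⟨hp⟩
  have hkey := hkeyZ a ha
  set g : PowerSeries (ZMod p) := PowerSeries.mk fun n => ((Nat.choose (2*n) n : ZMod p))^2
    with hg
  have hP₁c : ∀ i, P₁p.coeff i = if i < p then ((Nat.choose (2*i) i : ZMod p))^2 else 0 := by
    intro i; rw [hP₁p, coeff_of_sum]
  have hP₂c : ∀ i, P₂p.coeff i = if i < p then ((a i : ZMod p)) else 0 := by
    intro i; rw [hP₂p, coeff_of_sum]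
  have hP₁b : ∀ i, p ≤ i → P₁p.coeff i = 0 := fun i hi => by
    rw [hP₁c i, if_neg (not_lt.mpr hi)]
  have hP₂b : ∀ i, p ≤ i → P₂p.coeff i = 0 := fun i hi => by
    rw [hP₂c i, if_neg (not_lt.mpr hi)]
  -- B1
  have hB1 : g = (P₁p : PowerSeries (ZMod p)) * expandPS p g := by
    ext n
    rw [coeff_coe_mul_expandPS hp.pos P₁p hP₁b g n, hP₁c, if_pos (Nat.mod_lt _ hp.pos)]
    rw [hg, PowerSeries.coeff_mk, PowerSeries.coeff_mk]
    rw [show ((Nat.choose (2*n) n : ZMod p)) = _ from lucasCB n]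
    ring
  -- B2
  have hB2 : f₂p = (P₂p : PowerSeries (ZMod p)) * expandPS p g := by
    ext n
    rw [coeff_coe_mul_expandPS hp.pos P₂p hP₂b g n, hP₂c, if_pos (Nat.mod_lt _ hp.pos)]
    rw [hf₂p, PowerSeries.coeff_mk, hg, PowerSeries.coeff_mk]
    exact coeffL2 a hkey n
  -- chain
  have hchain : ∀ j : ℕ, expandPS p g =
      (P₁p : PowerSeries (ZMod p)) ^ (∑ i ∈ Finset.range j, p^(i+1))
        * expandPS (p^(j+1)) g := by
    intro j
    induction j with
    | zero => simp [pow_one]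
    | succ j ih =>
      have hstep : expandPS (p^(j+1)) g
          = (P₁p : PowerSeries (ZMod p)) ^ (p^(j+1)) * expandPS (p^(j+2)) g := by
        conv_lhs => rw [hB1]
        rw [expandPS_mul (pow_pos hp.pos _), expandPS_coe (pow_pos hp.pos _),
          ← pow_pow_eq_expand, Polynomial.coe_pow, expandPS_expandPS, ← pow_succ]
      rw [ih, hstep, Finset.sum_range_succ, pow_add]
      ring
  -- exponent arithmetic
  have hgeom : ∀ m : ℕ, (p - 1) * (∑ i ∈ Finset.range m, p ^ i) = p ^ m - 1 := by
    intro m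
    induction m with
    | zero => simp
    | succ m ih =>
      rw [Finset.sum_range_succ, Nat.mul_add, ih]
      have hA : 1 ≤ p ^ m := Nat.one_le_pow _ _ hp.pos
      have hB : p ^ (m+1) = p * p ^ m := by rw [pow_succ, mul_comm]
      have hC : (p - 1) * p ^ m = p * p ^ m - p ^ m := by
        rw [Nat.sub_mul, one_mul]
      have hD : p ^ m ≤ p * p ^ m := Nat.le_mul_of_pos_left _ hp.pos
      omega
  have hexp : p * (p ^ l - 1) / (p - 1) = ∑ i ∈ Finset.range l, p ^ (i+1) := by
    rw [← hgeom l]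
    rw [show p * ((p - 1) * ∑ i ∈ Finset.range l, p ^ i)
      = (p - 1) * (p * ∑ i ∈ Finset.range l, p ^ i) by ring]
    rw [Nat.mul_div_cancel_left _ (by have := hp.two_le; omega : 0 < p - 1)]
    rw [Finset.mul_sum]
    exact Finset.sum_congr rfl fun i _ => (pow_succ' p i).symm
  -- final computation
  have hpl1 : p ^ l - 1 + 1 = p ^ l := Nat.succ_pred_eq_of_pos (pow_pos hp.pos l)
  have hLHS : (P₂p : PowerSeries (ZMod p)) ^ (p ^ l - 1) * f₂p
      = (P₂p : PowerSeries (ZMod p)) ^ (p ^ l) * expandPS p g := by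
    rw [hB2, ← mul_assoc, ← pow_succ, hpl1]
  have hexpandf₂ : expandPS (p ^ l) f₂p
      = (P₂p : PowerSeries (ZMod p)) ^ (p ^ l) * expandPS (p ^ (l+1)) g := by
    rw [hB2, expandPS_mul (pow_pos hp.pos _), expandPS_coe (pow_pos hp.pos _),
      ← pow_pow_eq_expand, Polynomial.coe_pow, expandPS_expandPS, ← pow_succ]
  rw [hLHS, hexp, hexpandf₂, hchain l]
  ring
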